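/- Let f : ℝⁿ → ℝ ∪ {∞} be a proper polyhedral function (its epigraph is a nonempty polyhedron) and f*(u) := sup{⟨u,ω⟩ − f(ω) : ω ∈ ℝⁿ} its conjugate. Then f* is again a proper polyhedral function and f** = f. -/

import Mathlib

open scoped BigOperators

/-- The epigraph of `f : ℝⁿ → ℝ ∪ {±∞}` inside `ℝⁿ × ℝ`. -/
def epiSet {n : ℕ} (f : (Fin n → ℝ) → EReal) : Set ((Fin n → ℝ) × ℝ) :=
  {p | f p.1 ≤ (p.2 : EReal)}

/-- `f` is a proper polyhedral function:  it takes values in `ℝ ∪ {∞}` (never `−∞`) and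
its epigraph is a nonempty polyhedron in `ℝⁿ × ℝ`. -/
def IsProperPolyhedralFn {n : ℕ} (f : (Fin n → ℝ) → EReal) : Prop :=
  (∀ ω, f ω ≠ ⊥) ∧ (epiSet f).Nonempty ∧
  ∃ (N : ℕ) (u : Fin N → (Fin n → ℝ)) (b : Fin N → ℝ) (c : Fin N → ℝ),
    epiSet f = {p | ∀ i, c i ≤ (∑ j, u i j * p.1 j) + b i * p.2}

/-- The conjugate `f*(u) = sup_ω (⟨u,ω⟩ − f(ω))` of a function `f : ℝⁿ → ℝ ∪ {±∞}`. -/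
noncomputable def conjFn {n : ℕ} (f : (Fin n → ℝ) → EReal) : (Fin n → ℝ) → EReal :=
  fun u => ⨆ ω : Fin n → ℝ, (((∑ j, u j * ω j : ℝ) : EReal) - f ω)


lemma sum_ind {ι : Type} [Fintype ι] [DecidableEq ι] (p : ι) (a : ℝ) (f : ι → ℝ) :
    ∑ i, (if i = p then a else 0) * f i = a * f p := by
  simp [ite_mul, Finset.sum_ite_eq']

theorem myStepElim {ι J : Type} [Fintype ι] [Fintype J] (A : ι → J → ℝ) (α : ι → ℝ)
    (c : ι → ℝ) :
    ∃ (B : ι × ι → J → ℝ) (d : ι × ι → ℝ) (M : ι × ι → ι → ℝ),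
      (∀ r i, 0 ≤ M r i) ∧
      (∀ r j, B r j = ∑ i, M r i * A i j) ∧
      (∀ r, ∑ i, M r i * α i = 0) ∧
      (∀ r, d r = ∑ i, M r i * c i) ∧
      (∀ x : J → ℝ,
        (∃ t : ℝ, ∀ i, c i ≤ (∑ j, A i j * x j) + α i * t) ↔
        (∀ r, d r ≤ ∑ j, B r j * x j)) := by
  classical
  set M : ι × ι → ι → ℝ := fun r i =>
    if α r.1 = 0 ∧ r.1 = r.2 then (if i = r.1 then 1 else 0)
    else if 0 < α r.1 ∧ α r.2 < 0 then
      (if i = r.1 then -α r.2 else 0) + (if i = r.2 then α r.1 else 0)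
    else 0 with hM
  have hMsum : ∀ (p q : ι) (g : ι → ℝ), (∑ i, M (p, q) i * g i) =
      if α p = 0 ∧ p = q then g p
      else if 0 < α p ∧ α q < 0 then (-α q) * g p + α p * g q else 0 := by
    intro p q g
    by_cases h1 : α p = 0 ∧ p = q
    · obtain ⟨ha, hb⟩ := h1
      subst hb
      rw [if_pos ⟨ha, rfl⟩]
      calc (∑ i, M (p, p) i * g i) = ∑ i, (if i = p then (1:ℝ) else 0) * g i :=
            Finset.sum_congr rfl fun i _ => by simp [hM, ha]
        _ = g p := by simpa using sum_ind p 1 g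
    · rw [if_neg h1]
      by_cases h2 : 0 < α p ∧ α q < 0
      · rw [if_pos h2]
        calc (∑ i, M (p, q) i * g i)
            = ∑ i, ((if i = p then -α q else 0) + (if i = q then α p else 0)) * g i :=
              Finset.sum_congr rfl fun i _ => by simp only [hM]; rw [if_neg h1, if_pos h2]
          _ = (-α q) * g p + α p * g q := by
              simp only [add_mul, Finset.sum_add_distrib, sum_ind]
      · rw [if_neg h2]
        calc (∑ i, M (p, q) i * g i) = ∑ i, (0:ℝ) * g i :=
              Finset.sum_congr rfl fun i _ => by simp only [hM]; rw [if_neg h1, if_neg h2]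
          _ = 0 := by simp
  have hMnn : ∀ r i, 0 ≤ M r i := by
    rintro ⟨p, q⟩ i
    simp only [hM]
    by_cases h1 : α p = 0 ∧ p = q
    · rw [if_pos h1]; split_ifs <;> norm_num
    · rw [if_neg h1]
      by_cases h2 : 0 < α p ∧ α q < 0
      · rw [if_pos h2]
        obtain ⟨ha, hb⟩ := h2
        apply add_nonneg <;> (split_ifs <;> linarith)
      · rw [if_neg h2]
  have hα : ∀ r : ι × ι, ∑ i, M r i * α i = 0 := by
    rintro ⟨p, q⟩
    rw [hMsum]
    split_ifs with h1 h2
    · exact h1.1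
    · ring
    · rfl
  refine ⟨fun r j => ∑ i, M r i * A i j, fun r => ∑ i, M r i * c i, M, hMnn,
    fun _ _ => rfl, hα, fun _ => rfl, ?_⟩
  intro x
  have hBx : ∀ r : ι × ι, (∑ j, (∑ i, M r i * A i j) * x j) =
      ∑ i, M r i * (∑ j, A i j * x j) := by
    intro r
    simp only [Finset.sum_mul]
    rw [Finset.sum_comm]
    refine Finset.sum_congr rfl fun i _ => ?_
    rw [Finset.mul_sum]
    exact Finset.sum_congr rfl fun j _ => by ring
  constructor
  · rintro ⟨t, ht⟩ r
    rw [hBx]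
    calc (∑ i, M r i * c i) ≤ ∑ i, M r i * ((∑ j, A i j * x j) + α i * t) :=
          Finset.sum_le_sum fun i _ => mul_le_mul_of_nonneg_left (ht i) (hMnn r i)
      _ = (∑ i, M r i * (∑ j, A i j * x j)) + (∑ i, M r i * α i) * t := by
          simp only [mul_add, Finset.sum_add_distrib, Finset.sum_mul]
          congr 1
          exact Finset.sum_congr rfl fun i _ => by ring
      _ = ∑ i, M r i * (∑ j, A i j * x j) := by rw [hα]; ring
  · intro hx
    set g : ι → ℝ := fun i => c i - ∑ j, A i j * x j with hg
    have key : ∀ p q : ι, (if α p = 0 ∧ p = q then g p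
        else if 0 < α p ∧ α q < 0 then (-α q) * g p + α p * g q else 0) ≤ 0 := by
      intro p q
      have h1 := hx (p, q)
      rw [hBx] at h1
      have h2 : (∑ i, M (p,q) i * c i) - (∑ i, M (p,q) i * (∑ j, A i j * x j))
          = ∑ i, M (p,q) i * g i := by
        rw [← Finset.sum_sub_distrib]
        exact Finset.sum_congr rfl fun i _ => by rw [hg]; ring
      have h3 : (∑ i, M (p,q) i * g i) ≤ 0 := by rw [← h2]; linarith
      rw [hMsum] at h3; exact h3
    have hzero : ∀ i, α i = 0 → g i ≤ 0 := by
      intro i hi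
      have h := key i i
      rw [if_pos ⟨hi, rfl⟩] at h; exact h
    have hpair : ∀ p q, 0 < α p → α q < 0 → g p / α p ≤ g q / α q := by
      intro p q hp hq
      have h := key p q
      have h4 : ¬ (α p = 0 ∧ p = q) := fun hh => by rw [hh.1] at hp; exact lt_irrefl _ hp
      rw [if_neg h4, if_pos ⟨hp, hq⟩] at h
      have hq2 : g q / α q = -g q / -α q := by rw [neg_div_neg_eq]
      rw [hq2, div_le_div_iff₀ hp (neg_pos.2 hq)]
      nlinarith
    -- choose t
    set S : Finset ι := Finset.univ.filter (fun i => 0 < α i) with hS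
    set T : Finset ι := Finset.univ.filter (fun i => α i < 0) with hT
    set L : ι → ℝ := fun i => g i / α i with hL
    have hSmem : ∀ i, i ∈ S ↔ 0 < α i := by intro i; simp [hS]
    have hTmem : ∀ i, i ∈ T ↔ α i < 0 := by intro i; simp [hT]
    obtain ⟨t, htS, htT⟩ : ∃ t : ℝ, (∀ i ∈ S, L i ≤ t) ∧ (∀ i ∈ T, t ≤ L i) := by
      by_cases hSne : S.Nonempty
      · refine ⟨S.sup' hSne L, fun i hi => Finset.le_sup' L hi, fun q hq => ?_⟩
        refine Finset.sup'_le hSne L fun p hp => ?_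
        exact hpair p q ((hSmem p).1 hp) ((hTmem q).1 hq)
      · by_cases hTne : T.Nonempty
        · refine ⟨T.inf' hTne L, fun i hi => absurd hi (fun h => hSne ⟨i, h⟩),
            fun i hi => Finset.inf'_le L hi⟩
        · exact ⟨0, fun i hi => absurd hi (fun h => hSne ⟨i, h⟩),
            fun i hi => absurd hi (fun h => hTne ⟨i, h⟩)⟩
    refine ⟨t, fun i => ?_⟩
    have hgoal : g i ≤ α i * t → c i ≤ (∑ j, A i j * x j) + α i * t := by
      intro h; rw [hg] at h; simp at h; linarith
    apply hgoal
    rcases lt_trichotomy (α i) 0 with hneg | hz | hpos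
    · have := htT i ((hTmem i).2 hneg)
      rw [hL] at this
      calc g i = (g i / α i) * α i := (div_mul_cancel₀ _ (ne_of_lt hneg)).symm
        _ ≤ t * α i := mul_le_mul_of_nonpos_right this (le_of_lt hneg)
        _ = α i * t := by ring
    · rw [hz, zero_mul]; exact hzero i hz
    · have := htS i ((hSmem i).2 hpos)
      rw [hL, div_le_iff₀ hpos] at this
      linarith


theorem myFarkas : ∀ (k : ℕ) {ι : Type} [Fintype ι] (A : ι → Fin k → ℝ) (c : ι → ℝ),
    (¬ ∃ x : Fin k → ℝ, ∀ i, c i ≤ ∑ j, A i j * x j) →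
    ∃ y : ι → ℝ, (∀ i, 0 ≤ y i) ∧ (∀ j, ∑ i, y i * A i j = 0) ∧ 0 < ∑ i, y i * c i := by
  intro k
  induction k with
  | zero =>
    intro ι _ A c hinf
    classical
    push_neg at hinf
    obtain ⟨i₀, hi₀⟩ := hinf (fun j => 0)
    refine ⟨fun i => if i = i₀ then 1 else 0, fun i => by dsimp only; split_ifs <;> norm_num,
      fun j => j.elim0, ?_⟩
    have : (∑ i, (if i = i₀ then (1:ℝ) else 0) * c i) = c i₀ := by
      simp [ite_mul, Finset.sum_ite_eq']
    rw [this]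
    simp at hi₀
    linarith
  | succ k ih =>
    intro ι _ A c hinf
    classical
    obtain ⟨B, d, M, hMnn, hB, hα, hd, hiff⟩ :=
      myStepElim (fun i j => A i (Fin.castSucc j)) (fun i => A i (Fin.last k)) c
    have hinf' : ¬ ∃ x : Fin k → ℝ, ∀ r, d r ≤ ∑ j, B r j * x j := by
      rintro ⟨x, hx⟩
      obtain ⟨t, ht⟩ := (hiff x).2 hx
      refine hinf ⟨Fin.snoc x t, fun i => ?_⟩
      have hsum : (∑ j, A i j * (Fin.snoc x t : Fin (k+1) → ℝ) j)
          = (∑ j : Fin k, A i (Fin.castSucc j) * x j) + A i (Fin.last k) * t := by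
        rw [Fin.sum_univ_castSucc]
        simp [Fin.snoc_castSucc, Fin.snoc_last]
      rw [hsum]
      exact ht i
    obtain ⟨y', hy'nn, hy'B, hy'd⟩ := ih B d hinf'
    refine ⟨fun i => ∑ r, y' r * M r i, fun i => Finset.sum_nonneg fun r _ =>
      mul_nonneg (hy'nn r) (hMnn r i), ?_, ?_⟩
    · intro j
      have hswap : ∀ f : ι → ℝ, (∑ i, (∑ r, y' r * M r i) * f i)
          = ∑ r, y' r * (∑ i, M r i * f i) := by
        intro f
        simp only [Finset.sum_mul]
        rw [Finset.sum_comm]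
        refine Finset.sum_congr rfl fun r _ => ?_
        rw [Finset.mul_sum]
        exact Finset.sum_congr rfl fun i _ => by ring
      rw [hswap]
      refine Fin.lastCases ?_ (fun j => ?_) j
      · simp only [hα, mul_zero, Finset.sum_const_zero]
      · have := hy'B j
        calc (∑ r, y' r * ∑ i, M r i * A i (Fin.castSucc j))
            = ∑ r, y' r * B r j := by
              exact Finset.sum_congr rfl fun r _ => by rw [hB]
          _ = 0 := this
    · have hswap : (∑ i, (∑ r, y' r * M r i) * c i) = ∑ r, y' r * (∑ i, M r i * c i) := by
        simp only [Finset.sum_mul]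
        rw [Finset.sum_comm]
        refine Finset.sum_congr rfl fun r _ => ?_
        rw [Finset.mul_sum]
        exact Finset.sum_congr rfl fun i _ => by ring
      rw [hswap]
      calc (0:ℝ) < ∑ r, y' r * d r := hy'd
        _ = ∑ r, y' r * (∑ i, M r i * c i) :=
          Finset.sum_congr rfl fun r _ => by rw [hd]

theorem myProj : ∀ (m : ℕ) {ι J : Type} [Fintype ι] [Fintype J] (A : ι → J → ℝ)
    (W : ι → Fin m → ℝ) (c : ι → ℝ),
    ∃ (κ : Type) (_ : Fintype κ) (B : κ → J → ℝ) (d : κ → ℝ),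
      ∀ x : J → ℝ,
        (∃ w : Fin m → ℝ, ∀ i, c i ≤ (∑ j, A i j * x j) + ∑ l, W i l * w l) ↔
        (∀ r, d r ≤ ∑ j, B r j * x j) := by
  intro m
  induction m with
  | zero =>
    intro ι J _ _ A W c
    refine ⟨ι, inferInstance, A, c, fun x => ?_⟩
    constructor
    · rintro ⟨w, hw⟩ i; simpa using hw i
    · intro h; exact ⟨fun l => 0, fun i => by simpa using h i⟩
  | succ m ih =>
    intro ι J _ _ A W c
    classical
    obtain ⟨B₁, d₁, M₁, _, _, _, _, hiff₁⟩ :=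
      myStepElim (ι := ι) (J := J ⊕ Fin m)
        (fun i => Sum.elim (A i) (fun l => W i (Fin.castSucc l)))
        (fun i => W i (Fin.last m)) c
    obtain ⟨κ, hκ, B₂, d₂, hiff₂⟩ := ih (fun r j => B₁ r (Sum.inl j))
      (fun r l => B₁ r (Sum.inr l)) d₁
    refine ⟨κ, hκ, B₂, d₂, fun x => ?_⟩
    rw [← hiff₂ x]
    constructor
    · rintro ⟨w, hw⟩
      refine ⟨fun l => w (Fin.castSucc l), fun r => ?_⟩
      have h1 := (hiff₁ (Sum.elim x (fun l => w (Fin.castSucc l)))).1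
        ⟨w (Fin.last m), fun i => ?_⟩ r
      · calc d₁ r ≤ ∑ j : J ⊕ Fin m, B₁ r j * Sum.elim x (fun l => w (Fin.castSucc l)) j :=
            h1
          _ = (∑ j, B₁ r (Sum.inl j) * x j) + ∑ l, B₁ r (Sum.inr l) * w (Fin.castSucc l) := by
            rw [Fintype.sum_sum_type]; rfl
      · calc c i ≤ (∑ j, A i j * x j) + ∑ l, W i l * w l := hw i
          _ = (∑ j : J ⊕ Fin m, Sum.elim (A i) (fun l => W i (Fin.castSucc l)) j *
                Sum.elim x (fun l => w (Fin.castSucc l)) j) + W i (Fin.last m) * w (Fin.last m) := by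
            rw [Fintype.sum_sum_type, Fin.sum_univ_castSucc (f := fun l => W i l * w l)]
            simp only [Sum.elim_inl, Sum.elim_inr]
            ring
    · rintro ⟨w', hw'⟩
      obtain ⟨t, ht⟩ := (hiff₁ (Sum.elim x w')).2 (fun r => by
        calc d₁ r ≤ (∑ j, B₁ r (Sum.inl j) * x j) + ∑ l, B₁ r (Sum.inr l) * w' l := hw' r
          _ = ∑ j : J ⊕ Fin m, B₁ r j * Sum.elim x w' j := by
            rw [Fintype.sum_sum_type]; rfl)
      refine ⟨Fin.snoc w' t, fun i => ?_⟩
      have h2 := ht i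
      calc c i ≤ (∑ j : J ⊕ Fin m, Sum.elim (A i) (fun l => W i (Fin.castSucc l)) j *
            Sum.elim x w' j) + W i (Fin.last m) * t := h2
        _ = (∑ j, A i j * x j) + ∑ l, W i l * (Fin.snoc w' t : Fin (m+1) → ℝ) l := by
          rw [Fintype.sum_sum_type,
            Fin.sum_univ_castSucc (f := fun l => W i l * (Fin.snoc w' t : Fin (m+1) → ℝ) l)]
          simp only [Sum.elim_inl, Sum.elim_inr, Fin.snoc_castSucc, Fin.snoc_last]
          ring

lemma swapSum {ι J : Type} [Fintype ι] [Fintype J] (y : ι → ℝ) (U : ι → J → ℝ)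
    (x : J → ℝ) :
    ∑ i, y i * (∑ j, U i j * x j) = ∑ j, (∑ i, y i * U i j) * x j := by
  calc (∑ i, y i * (∑ j, U i j * x j)) = ∑ i, ∑ j, y i * (U i j * x j) := by
        exact Finset.sum_congr rfl fun i _ => by rw [Finset.mul_sum]
    _ = ∑ j, ∑ i, y i * (U i j * x j) := Finset.sum_comm
    _ = ∑ j, (∑ i, y i * U i j) * x j := by
        refine Finset.sum_congr rfl fun j _ => ?_
        rw [Finset.sum_mul]
        exact Finset.sum_congr rfl fun i _ => by ring

lemma ereal_cases (x : EReal) (h : x ≠ ⊥) : x = ⊤ ∨ ∃ r : ℝ, x = (r : EReal) := by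
  induction x using EReal.rec with
  | bot => exact absurd rfl h
  | coe r => exact Or.inr ⟨r, rfl⟩
  | top => exact Or.inl rfl

lemma ereal_eq_top (x : EReal) (h : ∀ t : ℝ, (t : EReal) ≤ x) : x = ⊤ := by
  induction x using EReal.rec with
  | bot => exact absurd (h 0) (by simp)
  | coe r => exact absurd (h (r + 1)) (by exact_mod_cast by linarith)
  | top => rfl

lemma ereal_eq_bot (x : EReal) (h : ∀ t : ℝ, x ≤ (t : EReal)) : x = ⊥ := by
  induction x using EReal.rec with
  | bot => rfl
  | coe r => exact absurd (h (r - 1)) (by exact_mod_cast by linarith)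
  | top => exact absurd (h 0) (by simp)

lemma le_of_eps (a bb β : ℝ) (h : ∀ ε : ℝ, 0 < ε → a ≤ bb + β * ε) : a ≤ bb := by
  rcases le_or_gt β 0 with hβ | hβ
  · have h1 := h 1 one_pos; nlinarith
  · by_contra hlt
    push_neg at hlt
    have h2 := h ((a - bb) / (2 * β)) (by apply div_pos <;> linarith)
    have h3 : β * ((a - bb) / (2 * β)) = (a - bb) / 2 := by field_simp
    rw [h3] at h2; linarith

/-- The conjugate of a proper polyhedral function is a proper polyhedral function, and
biduality holds: `f** = f`. -/
theorem stmt14 {n : ℕ} (f : (Fin n → ℝ) → EReal) (hf : IsProperPolyhedralFn f) :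
    IsProperPolyhedralFn (conjFn f) ∧ conjFn (conjFn f) = f := by
  classical
  obtain ⟨hbot, hne, N, u, b, c, hP⟩ := hf
  have mem : ∀ (ω : Fin n → ℝ) (s : ℝ),
      f ω ≤ (s : EReal) ↔ ∀ i, c i ≤ (∑ j, u i j * ω j) + b i * s :=
    fun ω s => Set.ext_iff.1 hP (ω, s)
  have hreal : ∀ (ω : Fin n → ℝ) (s : ℝ), f ω ≤ (s : EReal) → ∃ r : ℝ, f ω = (r : EReal) ∧ r ≤ s := by
    intro ω s h
    rcases ereal_cases (f ω) (hbot ω) with htop | ⟨r, hr⟩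
    · rw [htop] at h; exact absurd h (by simp)
    · exact ⟨r, hr, by rw [hr] at h; exact_mod_cast h⟩
  -- all b i are nonnegative
  have hb : ∀ i, 0 ≤ b i := by
    intro i
    by_contra hbi
    push_neg at hbi
    obtain ⟨⟨ω₀, s₀⟩, h₀⟩ := hne
    set q : ℝ := (c i - (∑ j, u i j * ω₀ j) - 1) / b i with hq
    have hs : f ω₀ ≤ ((max s₀ q : ℝ) : EReal) :=
      le_trans h₀ (by exact_mod_cast le_max_left s₀ q)
    have h1 := (mem ω₀ (max s₀ q)).1 hs i
    have h2 : b i * max s₀ q ≤ b i * q :=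
      mul_le_mul_of_nonpos_left (le_max_right s₀ q) (le_of_lt hbi)
    have h3 : b i * q = c i - (∑ j, u i j * ω₀ j) - 1 := by
      rw [hq, mul_div_cancel₀ _ (ne_of_lt hbi)]
    linarith
  -- some b i is positive
  have hb0 : ∃ i₀, 0 < b i₀ := by
    by_contra hno
    push_neg at hno
    have hz : ∀ i, b i = 0 := fun i => le_antisymm (hno i) (hb i)
    obtain ⟨⟨ω₀, s₀⟩, h₀⟩ := hne
    have hcon := (mem ω₀ s₀).1 h₀
    have : ∀ s : ℝ, f ω₀ ≤ (s : EReal) := by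
      intro s
      refine (mem ω₀ s).2 fun i => ?_
      have := hcon i
      rw [hz i] at this ⊢
      simpa using this
    exact hbot ω₀ (ereal_eq_bot _ this)
  have hgmem : ∀ (v ω : Fin n → ℝ) (r : ℝ), f ω = (r : EReal) →
      (((∑ j, v j * ω j) - r : ℝ) : EReal) ≤ conjFn f v := by
    intro v ω r hr
    have h1 : (((∑ j, v j * ω j : ℝ)) : EReal) - f ω ≤ conjFn f v :=
      le_iSup (fun ω => (((∑ j, v j * ω j : ℝ)) : EReal) - f ω) ω
    rw [hr] at h1
    rw [EReal.coe_sub]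
    exact h1
  have hchar : ∀ (v : Fin n → ℝ) (t : ℝ), conjFn f v ≤ (t : EReal) ↔
      (∀ (ω : Fin n → ℝ) (s : ℝ), f ω ≤ (s : EReal) → (∑ j, v j * ω j) - s ≤ t) := by
    intro v t
    constructor
    · intro h ω s hs
      obtain ⟨r, hr, hrs⟩ := hreal ω s hs
      have h2 := le_trans (hgmem v ω r hr) h
      rw [EReal.coe_le_coe_iff] at h2
      linarith
    · intro h
      refine iSup_le fun ω => ?_
      rcases ereal_cases (f ω) (hbot ω) with htop | ⟨r, hr⟩
      · rw [htop, EReal.sub_top]; exact bot_le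
      · rw [hr, ← EReal.coe_sub]
        exact_mod_cast h ω r (le_of_eq hr)
  have hgbot : ∀ v, conjFn f v ≠ ⊥ := by
    intro v hv
    obtain ⟨⟨ω₀, s₀⟩, h₀⟩ := hne
    obtain ⟨r₀, hr₀, _⟩ := hreal ω₀ s₀ h₀
    have := hgmem v ω₀ r₀ hr₀
    rw [hv, le_bot_iff] at this
    exact EReal.coe_ne_bot _ this
  -- strong duality via Farkas
  have hstrong : ∀ (v : Fin n → ℝ) (t : ℝ), conjFn f v ≤ (t : EReal) → ∀ ε : ℝ, 0 < ε →
      ∃ z : Fin N → ℝ, (∀ i, 0 ≤ z i) ∧ (∀ j, ∑ i, z i * u i j = -v j) ∧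
        (∑ i, z i * b i = 1) ∧ -(∑ i, z i * c i) ≤ t + ε := by
    intro v t hv ε hε
    set R : Option (Fin N) → Fin (n+1) → ℝ :=
      fun o => o.elim (Fin.snoc v (-1)) (fun i => Fin.snoc (u i) (b i)) with hR
    set C : Option (Fin N) → ℝ := fun o => o.elim (t + ε) c with hC
    have hsum : ∀ (x : Fin (n+1) → ℝ) (w : Fin n → ℝ) (a : ℝ),
        (∑ j, (Fin.snoc w a : Fin (n+1) → ℝ) j * x j)
          = (∑ j, w j * x (Fin.castSucc j)) + a * x (Fin.last n) := by
      intro x w a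
      rw [Fin.sum_univ_castSucc]
      simp [Fin.snoc_castSucc, Fin.snoc_last]
    have hinf : ¬ ∃ x : Fin (n+1) → ℝ, ∀ o, C o ≤ ∑ j, R o j * x j := by
      rintro ⟨x, hx⟩
      set ω : Fin n → ℝ := fun j => x (Fin.castSucc j) with hω
      set s : ℝ := x (Fin.last n) with hs
      have hfs : f ω ≤ (s : EReal) := by
        refine (mem ω s).2 fun i => ?_
        have h1 := hx (some i)
        rw [hC, hR] at h1
        simpa [hsum x (u i) (b i)] using h1
      have h2 := hx none
      rw [hC, hR] at h2
      simp only [Option.elim] at h2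
      rw [hsum x v (-1)] at h2
      have h3 := (hchar v t).1 hv ω s hfs
      rw [hω, hs] at h3
      linarith
    obtain ⟨y, hynn, hyA, hyc⟩ := myFarkas (n+1) R C hinf
    set μ : ℝ := y none with hμ
    have hj : ∀ j : Fin n, μ * v j + ∑ i, y (some i) * u i j = 0 := by
      intro j
      have h1 := hyA (Fin.castSucc j)
      rw [Fintype.sum_option] at h1
      simpa [hR, Fin.snoc_castSucc] using h1
    have hlast : -μ + ∑ i, y (some i) * b i = 0 := by
      have h1 := hyA (Fin.last n)
      rw [Fintype.sum_option] at h1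
      have h2 : (Fin.snoc v (-1) : Fin (n+1) → ℝ) (Fin.last n) = -1 := Fin.snoc_last _ _
      have h3 : ∀ i, (Fin.snoc (u i) (b i) : Fin (n+1) → ℝ) (Fin.last n) = b i :=
        fun i => Fin.snoc_last _ _
      simp only [hR, Option.elim, h2, h3] at h1
      linarith [h1]
    have hcost : 0 < μ * (t + ε) + ∑ i, y (some i) * c i := by
      have h1 := hyc
      rw [Fintype.sum_option] at h1
      simpa [hC] using h1
    have hμpos : 0 < μ := by
      rcases (hynn none).eq_or_lt with h0 | h
      swap
      · exact h
      exfalso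
      have h00 : μ = 0 := by rw [hμ, ← h0]
      obtain ⟨⟨ω₀, s₀⟩, hP₀⟩ := hne
      have hcon := (mem ω₀ s₀).1 hP₀
      have h1 : (∑ i, y (some i) * c i) ≤ ∑ i, y (some i) * ((∑ j, u i j * ω₀ j) + b i * s₀) :=
        Finset.sum_le_sum fun i _ => mul_le_mul_of_nonneg_left (hcon i) (hynn (some i))
      have h2 : (∑ i, y (some i) * ((∑ j, u i j * ω₀ j) + b i * s₀))
          = (∑ j, (∑ i, y (some i) * u i j) * ω₀ j) + (∑ i, y (some i) * b i) * s₀ := by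
        simp only [mul_add, Finset.sum_add_distrib]
        rw [swapSum]
        congr 1
        rw [Finset.sum_mul]
        exact Finset.sum_congr rfl fun i _ => by ring
      have h3 : ∀ j, (∑ i, y (some i) * u i j) = 0 := by
        intro j
        have := hj j
        rw [h00] at this
        simpa using this
      have h4 : (∑ i, y (some i) * b i) = 0 := by
        have := hlast
        rw [h00] at this
        simpa using this
      rw [h2, h4] at h1
      simp only [h3, zero_mul, Finset.sum_const_zero, zero_add, zero_mul, add_zero] at h1
      rw [h00] at hcost
      simp only [zero_mul, zero_add] at hcost
      linarith
    refine ⟨fun i => y (some i) / μ, fun i => div_nonneg (hynn _) hμpos.le, ?_, ?_, ?_⟩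
    · intro j
      have h5 : (∑ i, y (some i) / μ * u i j) = (∑ i, y (some i) * u i j) / μ := by
        rw [Finset.sum_div]
        exact Finset.sum_congr rfl fun i _ => by ring
      rw [h5]
      have h6 := hj j
      rw [div_eq_iff (ne_of_gt hμpos)]
      linarith [h6]
    · have h5 : (∑ i, y (some i) / μ * b i) = (∑ i, y (some i) * b i) / μ := by
        rw [Finset.sum_div]
        exact Finset.sum_congr rfl fun i _ => by ring
      rw [h5, div_eq_iff (ne_of_gt hμpos)]
      linarith [hlast]
    · have h5 : (∑ i, y (some i) / μ * c i) = (∑ i, y (some i) * c i) / μ := by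
        rw [Finset.sum_div]
        exact Finset.sum_congr rfl fun i _ => by ring
      rw [h5, ← neg_div, div_le_iff₀ hμpos]
      nlinarith [hcost]
  -- weak duality
  have hweak : ∀ (v : Fin n → ℝ) (t : ℝ),
      (∃ z : Fin N → ℝ, (∀ i, 0 ≤ z i) ∧ (∀ j, ∑ i, z i * u i j = -v j) ∧
        (∑ i, z i * b i = 1) ∧ -(∑ i, z i * c i) ≤ t) → conjFn f v ≤ (t : EReal) := by
    rintro v t ⟨z, hznn, hzu, hzb, hzc⟩
    refine (hchar v t).2 fun ω s hs => ?_
    have hcon := (mem ω s).1 hs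
    have h1 : (∑ i, z i * c i) ≤ ∑ i, z i * ((∑ j, u i j * ω j) + b i * s) :=
      Finset.sum_le_sum fun i _ => mul_le_mul_of_nonneg_left (hcon i) (hznn i)
    have h2 : (∑ i, z i * ((∑ j, u i j * ω j) + b i * s))
        = (∑ j, (∑ i, z i * u i j) * ω j) + (∑ i, z i * b i) * s := by
      simp only [mul_add, Finset.sum_add_distrib]
      rw [swapSum]
      congr 1
      rw [Finset.sum_mul]
      exact Finset.sum_congr rfl fun i _ => by ring
    have h3 : (∑ j, (∑ i, z i * u i j) * ω j) = -(∑ j, v j * ω j) := by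
      rw [← Finset.sum_neg_distrib]
      exact Finset.sum_congr rfl fun j _ => by rw [hzu j]; ring
    rw [h2, h3, hzb] at h1
    linarith
  -- nonemptiness of the epigraph of the conjugate
  obtain ⟨i₀, hbi₀⟩ := hb0
  have hgne : (epiSet (conjFn f)).Nonempty := by
    refine ⟨(fun j => -(u i₀ j / b i₀), -(c i₀ / b i₀)), ?_⟩
    show conjFn f _ ≤ _
    refine hweak _ _ ⟨fun i => if i = i₀ then 1 / b i₀ else 0,
      fun i => by dsimp only; split_ifs <;> positivity, ?_, ?_, ?_⟩
    · intro j
      rw [sum_ind i₀ (1 / b i₀) (fun i => u i j)]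
      field_simp
    · rw [sum_ind i₀ (1 / b i₀) b]
      field_simp
    · rw [sum_ind i₀ (1 / b i₀) c]
      have : 1 / b i₀ * c i₀ = c i₀ / b i₀ := by ring
      rw [this]
  -- polyhedrality of the epigraph of the conjugate
  have hpoly : ∃ (N' : ℕ) (u' : Fin N' → (Fin n → ℝ)) (b' : Fin N' → ℝ) (c' : Fin N' → ℝ),
      epiSet (conjFn f) = {p | ∀ i, c' i ≤ (∑ j, u' i j * p.1 j) + b' i * p.2} := by
    set ι : Type := Fin N ⊕ ((Fin n ⊕ Fin n) ⊕ (Unit ⊕ (Unit ⊕ Unit))) with hι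
    set Ac : ι → Option (Fin n) → ℝ := Sum.elim (fun _ _ => 0)
      (Sum.elim (Sum.elim (fun j o => if o = some j then 1 else 0)
        (fun j o => if o = some j then -1 else 0))
        (Sum.elim (fun _ _ => 0) (Sum.elim (fun _ _ => 0)
          (fun _ o => if o = none then 1 else 0)))) with hAc
    set Wc : ι → Fin N → ℝ := Sum.elim (fun i l => if l = i then 1 else 0)
      (Sum.elim (Sum.elim (fun j l => u l j) (fun j l => -u l j))
        (Sum.elim (fun _ l => b l) (Sum.elim (fun _ l => -b l) (fun _ l => c l)))) with hWc
    set cc : ι → ℝ := Sum.elim (fun _ => 0)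
      (Sum.elim (Sum.elim (fun _ => 0) (fun _ => 0))
        (Sum.elim (fun _ => 1) (Sum.elim (fun _ => -1) (fun _ => 0)))) with hcc
    obtain ⟨κ, hκFT, B, d, hiff⟩ := myProj N Ac Wc cc
    have hQiff : ∀ (v : Fin n → ℝ) (t : ℝ),
        (∃ z : Fin N → ℝ, (∀ i, 0 ≤ z i) ∧ (∀ j, ∑ i, z i * u i j = -v j) ∧
          (∑ i, z i * b i = 1) ∧ -(∑ i, z i * c i) ≤ t)
        ↔ (∀ r, d r ≤ (∑ j, B r (some j) * v j) + B r none * t) := by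
      intro v t
      set xx : Option (Fin n) → ℝ := fun o => o.elim t v with hxx
      have hsum2 : ∀ r, (∑ o : Option (Fin n), B r o * xx o)
          = (∑ j, B r (some j) * v j) + B r none * t := by
        intro r
        rw [Fintype.sum_option]
        simp only [hxx, Option.elim]
        ring
      have hcomm : ∀ (z : Fin N → ℝ) (g : Fin N → ℝ), (∑ i, z i * g i) = ∑ l, g l * z l :=
        fun z g => Finset.sum_congr rfl fun i _ => by ring
      have hnegsum : ∀ (z : Fin N → ℝ) (g : Fin N → ℝ),
          (∑ l, -g l * z l) = -(∑ l, g l * z l) := by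
        intro z g
        rw [← Finset.sum_neg_distrib]
        exact Finset.sum_congr rfl fun l _ => by ring
      constructor
      · rintro ⟨z, hznn, hzu, hzb, hzc⟩
        intro r
        rw [← hsum2 r]
        refine (hiff xx).1 ⟨z, ?_⟩ r
        rintro (i | ((j | j) | (⟨⟩ | (⟨⟩ | ⟨⟩))))
        · simp only [hAc, hcc, hWc, Sum.elim_inl, zero_mul, Finset.sum_const_zero, zero_add]
          rw [sum_ind i 1 z]
          simpa using hznn i
        · simp only [hAc, hcc, hWc, Sum.elim_inr, Sum.elim_inl]
          rw [sum_ind (some j) 1 xx, ← hcomm z (fun l => u l j), hzu j]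
          simp [hxx]
        · simp only [hAc, hcc, hWc, Sum.elim_inr, Sum.elim_inl]
          rw [sum_ind (some j) (-1) xx, hnegsum z (fun l => u l j),
            ← hcomm z (fun l => u l j), hzu j]
          simp [hxx]
        · simp only [hAc, hcc, hWc, Sum.elim_inr, Sum.elim_inl, zero_mul,
            Finset.sum_const_zero, zero_add]
          rw [← hcomm z b, hzb]
        · simp only [hAc, hcc, hWc, Sum.elim_inr, Sum.elim_inl, zero_mul,
            Finset.sum_const_zero, zero_add]
          rw [hnegsum z b, ← hcomm z b, hzb]
        · simp only [hAc, hcc, hWc, Sum.elim_inr]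
          rw [sum_ind none 1 xx, ← hcomm z c]
          simp only [hxx, Option.elim]
          linarith
      · intro h
        obtain ⟨z, hz⟩ := (hiff xx).2 (fun r => by rw [hsum2]; exact h r)
        have hznn : ∀ i, 0 ≤ z i := by
          intro i
          have h1 := hz (Sum.inl i)
          simp only [hAc, hcc, hWc, Sum.elim_inl, zero_mul, Finset.sum_const_zero, zero_add] at h1
          rw [sum_ind i 1 z] at h1
          simpa using h1
        have hzu : ∀ j, (∑ i, z i * u i j) = -v j := by
          intro j
          have h1 := hz (Sum.inr (Sum.inl (Sum.inl j)))
          have h2 := hz (Sum.inr (Sum.inl (Sum.inr j)))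
          simp only [hAc, hcc, hWc, Sum.elim_inr, Sum.elim_inl] at h1 h2
          rw [sum_ind (some j) 1 xx, ← hcomm z (fun l => u l j)] at h1
          rw [sum_ind (some j) (-1) xx, hnegsum z (fun l => u l j),
            ← hcomm z (fun l => u l j)] at h2
          simp only [hxx, Option.elim] at h1 h2
          simp at h1 h2
          linarith
        have hzb : (∑ i, z i * b i) = 1 := by
          have h1 := hz (Sum.inr (Sum.inr (Sum.inl ())))
          have h2 := hz (Sum.inr (Sum.inr (Sum.inr (Sum.inl ()))))
          simp only [hAc, hcc, hWc, Sum.elim_inr, Sum.elim_inl, zero_mul,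
            Finset.sum_const_zero, zero_add] at h1 h2
          rw [← hcomm z b] at h1
          rw [hnegsum z b, ← hcomm z b] at h2
          linarith
        have hzc : -(∑ i, z i * c i) ≤ t := by
          have h1 := hz (Sum.inr (Sum.inr (Sum.inr (Sum.inr ()))))
          simp only [hAc, hcc, hWc, Sum.elim_inr] at h1
          rw [sum_ind none 1 xx, ← hcomm z c] at h1
          simp only [hxx, Option.elim] at h1
          linarith
        exact ⟨z, hznn, hzu, hzb, hzc⟩
    have hEpiG : epiSet (conjFn f) =
        {p : (Fin n → ℝ) × ℝ | ∀ r : κ, d r ≤ (∑ j, B r (some j) * p.1 j) + B r none * p.2} := by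
      ext ⟨v, t⟩
      simp only [epiSet, Set.mem_setOf_eq]
      constructor
      · intro h r
        have hεb : ∀ ε : ℝ, 0 < ε →
            d r ≤ ((∑ j, B r (some j) * v j) + B r none * t) + B r none * ε := by
          intro ε hε
          obtain ⟨z, hz1, hz2, hz3, hz4⟩ := hstrong v t h ε hε
          have h1 := (hQiff v (t + ε)).1 ⟨z, hz1, hz2, hz3, hz4⟩ r
          linarith [h1, show B r none * (t + ε) = B r none * t + B r none * ε from by ring]
        have := le_of_eps (d r) ((∑ j, B r (some j) * v j) + B r none * t) (B r none) hεb
        linarith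
      · intro h
        exact hweak v t ((hQiff v t).2 fun r => h r)
    obtain ⟨M', e⟩ : ∃ M' : ℕ, Nonempty (κ ≃ Fin M') := ⟨_, ⟨hκFT.equivFin⟩⟩
    obtain ⟨e⟩ := e
    refine ⟨M', fun i' j => B (e.symm i') (some j), fun i' => B (e.symm i') none,
      fun i' => d (e.symm i'), ?_⟩
    rw [hEpiG]
    ext p
    simp only [Set.mem_setOf_eq]
    constructor
    · intro h i'
      exact h (e.symm i')
    · intro h r
      have := h (e r)
      rwa [e.symm_apply_apply] at this
  -- biduality
  have hminor : ∀ i : Fin N, 0 < b i → ∀ (ω : Fin n → ℝ) (s : ℝ), f ω ≤ (s : EReal) →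
      (∑ j, (-(u i j) / b i) * ω j) - s ≤ -c i / b i := by
    intro i hbi ω s hs
    have h1 := (mem ω s).1 hs i
    have h2 : (∑ j, (-(u i j) / b i) * ω j) = -(∑ j, u i j * ω j) / b i := by
      rw [eq_div_iff (ne_of_gt hbi), Finset.sum_mul, ← Finset.sum_neg_distrib]
      exact Finset.sum_congr rfl fun j _ => by field_simp
    rw [h2, show -(∑ j, u i j * ω j) / b i - s = (-(∑ j, u i j * ω j) - s * b i) / b i from by
      field_simp, div_le_div_iff₀ hbi hbi]
    nlinarith [mul_le_mul_of_nonneg_right h1 hbi.le]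
  have haff : ∀ (ω₀ v : Fin n → ℝ) (rr : ℝ),
      (∀ (ω : Fin n → ℝ) (s : ℝ), f ω ≤ (s : EReal) → (∑ j, v j * ω j) - s ≤ rr) →
      (((∑ j, v j * ω₀ j) - rr : ℝ) : EReal) ≤ conjFn (conjFn f) ω₀ := by
    intro ω₀ v rr hv
    have h6 : conjFn f v ≤ (rr : EReal) := (hchar v rr).2 hv
    have h7 : ((∑ j, ω₀ j * v j : ℝ) : EReal) - conjFn f v ≤ conjFn (conjFn f) ω₀ :=
      le_iSup (fun w => ((∑ j, ω₀ j * w j : ℝ) : EReal) - conjFn f w) v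
    have hcv : (∑ j, ω₀ j * v j) = ∑ j, v j * ω₀ j :=
      Finset.sum_congr rfl fun j _ => mul_comm _ _
    rw [hcv] at h7
    refine le_trans ?_ h7
    rcases ereal_cases (conjFn f v) (hgbot v) with htop | ⟨ρ, hρ⟩
    · rw [htop] at h6; exact absurd h6 (by simp)
    · rw [hρ, ← EReal.coe_sub, EReal.coe_le_coe_iff]
      have h8 : ρ ≤ rr := by rw [hρ] at h6; exact_mod_cast h6
      linarith
  have hviolate : ∀ (ω₀ : Fin n → ℝ) (t' : ℝ), ¬ f ω₀ ≤ (t' : EReal) →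
      (t' : EReal) ≤ conjFn (conjFn f) ω₀ := by
    intro ω₀ t' hnot
    have hex : ∃ i, ¬ (c i ≤ (∑ j, u i j * ω₀ j) + b i * t') := by
      by_contra hall
      push_neg at hall
      exact hnot ((mem ω₀ t').2 fun i => by linarith [hall i])
    obtain ⟨i, hvio⟩ := hex
    push_neg at hvio
    rcases (hb i).eq_or_lt with hbz | hbi
    · -- b i = 0
      set v₀ : Fin n → ℝ := fun j => -(u i₀ j) / b i₀ with hv₀
      set rr₀ : ℝ := -c i₀ / b i₀ with hrr₀
      have hgap : 0 < c i - (∑ j, u i j * ω₀ j) := by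
        rw [← hbz] at hvio; simp at hvio; linarith
      set base : ℝ := (∑ j, v₀ j * ω₀ j) - rr₀ with hbase
      set lam : ℝ := max 0 ((t' - base) / (c i - (∑ j, u i j * ω₀ j))) with hlam
      have hlam0 : 0 ≤ lam := le_max_left _ _
      set v : Fin n → ℝ := fun j => v₀ j - lam * u i j with hv
      have hsplit : ∀ ω : Fin n → ℝ,
          (∑ j, v j * ω j) = (∑ j, v₀ j * ω j) - lam * (∑ j, u i j * ω j) := by
        intro ω
        rw [Finset.mul_sum, ← Finset.sum_sub_distrib]
        exact Finset.sum_congr rfl fun j _ => by simp only [hv]; ring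
      have hminv : ∀ (ω : Fin n → ℝ) (s : ℝ), f ω ≤ (s : EReal) →
          (∑ j, v j * ω j) - s ≤ rr₀ - lam * c i := by
        intro ω s hs
        have h1 := hminor i₀ hbi₀ ω s hs
        have h1' : (∑ j, v₀ j * ω j) - s ≤ rr₀ := by
          simp only [hv₀, hrr₀]; exact h1
        have h2 := (mem ω s).1 hs i
        rw [← hbz] at h2
        have h3 : c i ≤ ∑ j, u i j * ω j := by linarith [h2]
        have h4 : lam * c i ≤ lam * (∑ j, u i j * ω j) :=
          mul_le_mul_of_nonneg_left h3 hlam0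
        rw [hsplit ω]
        linarith
      have h5 := haff ω₀ v (rr₀ - lam * c i) hminv
      refine le_trans ?_ h5
      rw [EReal.coe_le_coe_iff, hsplit ω₀]
      have h6 : (t' - base) ≤ lam * (c i - (∑ j, u i j * ω₀ j)) := by
        rcases le_or_gt (t' - base) 0 with hle | hlt
        · nlinarith [mul_nonneg hlam0 hgap.le]
        · have h7 : (t' - base) / (c i - (∑ j, u i j * ω₀ j)) ≤ lam := le_max_right _ _
          rw [div_le_iff₀ hgap] at h7
          nlinarith [h7]
      have h8 : lam * (c i - (∑ j, u i j * ω₀ j))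
          = lam * c i - lam * (∑ j, u i j * ω₀ j) := by ring
      rw [hbase] at h6
      linarith
    · -- b i > 0
      set v : Fin n → ℝ := fun j => -(u i j) / b i with hv
      have hminv : ∀ (ω : Fin n → ℝ) (s : ℝ), f ω ≤ (s : EReal) →
          (∑ j, v j * ω j) - s ≤ -c i / b i := by
        intro ω s hs
        simpa only [hv] using hminor i hbi ω s hs
      have h5 := haff ω₀ v (-c i / b i) hminv
      refine le_trans ?_ h5
      rw [EReal.coe_le_coe_iff]
      have h2 : (∑ j, v j * ω₀ j) = -(∑ j, u i j * ω₀ j) / b i := by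
        rw [eq_div_iff (ne_of_gt hbi), Finset.sum_mul, ← Finset.sum_neg_distrib]
        refine Finset.sum_congr rfl fun j _ => ?_
        simp only [hv]
        field_simp
      rw [h2, show -(∑ j, u i j * ω₀ j) / b i - (-c i / b i)
          = (c i - ∑ j, u i j * ω₀ j) / b i from by field_simp; ring, le_div_iff₀ hbi]
      nlinarith [hvio]
  have hbid : conjFn (conjFn f) = f := by
    funext ω₀
    refine le_antisymm ?_ ?_
    · refine iSup_le fun v => ?_
      have hcv : (∑ j, ω₀ j * v j) = ∑ j, v j * ω₀ j :=
        Finset.sum_congr rfl fun j _ => mul_comm _ _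
      rw [hcv]
      rcases ereal_cases (f ω₀) (hbot ω₀) with htop | ⟨r₀, hr₀⟩
      · rw [htop]; exact le_top
      · rw [hr₀]
        have h5 := hgmem v ω₀ r₀ hr₀
        rcases ereal_cases (conjFn f v) (hgbot v) with hgt | ⟨ρ, hρ⟩
        · rw [hgt, EReal.sub_top]; exact bot_le
        · rw [hρ, ← EReal.coe_sub, EReal.coe_le_coe_iff]
          rw [hρ, EReal.coe_le_coe_iff] at h5
          linarith
    · rcases ereal_cases (f ω₀) (hbot ω₀) with htop | ⟨r₀, hr₀⟩
      · rw [htop]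
        have hall : ∀ t' : ℝ, (t' : EReal) ≤ conjFn (conjFn f) ω₀ := by
          intro t'
          refine hviolate ω₀ t' ?_
          rw [htop]
          simp
        exact le_of_eq (ereal_eq_top _ hall).symm
      · rw [hr₀]
        by_contra hlt
        push_neg at hlt
        obtain ⟨t', h1, h2⟩ := EReal.lt_iff_exists_real_btwn.1 hlt
        have h3 : (t' : EReal) ≤ conjFn (conjFn f) ω₀ := by
          refine hviolate ω₀ t' ?_
          rw [hr₀]
          intro hc
          have h4 := EReal.coe_le_coe_iff.1 hc
          have h5 := EReal.coe_lt_coe_iff.1 h2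
          linarith
        exact absurd (lt_of_le_of_lt h3 h1) (lt_irrefl _)
  exact ⟨⟨hgbot, hgne, hpoly⟩, hbid⟩
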